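/- For every integer m ≥ 1, the hypercube {-1,1}^(2^m + m - 1) can be covered by 2^m skewed hyperplanes. Concretely, the 2^m hyperplanes given by sum_{j=1}^{2^m-1} x_j + sum_{j=0}^{m-1} ε_j 2^j x_{2^m+j} = 0, over all sign choices ε ∈ {-1,1}^m, cover the hypercube. -/
import Mathlib

lemma exists_signs (m : ℕ) : ∀ k : ℤ, |k| ≤ 2 ^ m - 1 → 2 ∣ (k + 2 ^ m - 1) →
    ∃ σ : ℕ → ℤ, (∀ j < m, σ j = 1 ∨ σ j = -1) ∧ ∑ j ∈ Finset.range m, σ j * 2 ^ j = k := by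
  induction m with
  | zero =>
    intro k h1 h2
    refine ⟨fun _ => 1, by simp, ?_⟩
    simp only [pow_zero] at h1
    rw [abs_le] at h1
    simp only [Finset.range_zero, Finset.sum_empty]
    omega
  | succ m ih =>
    have hn : (0:ℤ) < 2 ^ m := by positivity
    have hp : (2:ℤ) ^ (m+1) = 2 * 2 ^ m := by ring
    intro k h1 h2
    rw [abs_le, hp] at h1
    rw [hp] at h2
    rcases le_or_gt 1 k with hk | hk
    · obtain ⟨σ, hσ, hs⟩ := ih (k - 2 ^ m) (by rw [abs_le]; omega) (by omega)
      refine ⟨fun j => if j = m then 1 else σ j, ?_, ?_⟩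
      · intro j hj
        by_cases h : j = m
        · simp [h]
        · simpa [h] using hσ j (by omega)
      · have hits : ∀ j ∈ Finset.range m, (if j = m then (1:ℤ) else σ j) * 2 ^ j
            = σ j * 2 ^ j := by
          intro j hj
          rw [Finset.mem_range] at hj
          rw [if_neg (Nat.ne_of_lt hj)]
        simp only [Finset.sum_range_succ]
        rw [if_true, Finset.sum_congr rfl hits, hs]
        ring
    · obtain ⟨σ, hσ, hs⟩ := ih (k + 2 ^ m) (by rw [abs_le]; omega) (by omega)
      refine ⟨fun j => if j = m then -1 else σ j, ?_, ?_⟩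
      · intro j hj
        by_cases h : j = m
        · simp [h]
        · simpa [h] using hσ j (by omega)
      · have hits : ∀ j ∈ Finset.range m, (if j = m then (-1:ℤ) else σ j) * 2 ^ j
            = σ j * 2 ^ j := by
          intro j hj
          rw [Finset.mem_range] at hj
          rw [if_neg (Nat.ne_of_lt hj)]
        simp only [Finset.sum_range_succ]
        rw [if_true, Finset.sum_congr rfl hits, hs]
        ring

theorem cover_cube_with_two_pow_m_skewed_hyperplanes
    (m : ℕ) (hm : 1 ≤ m) (x : ℕ → ℝ)
    (hx : ∀ i < 2 ^ m + m - 1, x i = 1 ∨ x i = -1) :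
    ∃ ε : ℕ → ℝ, (∀ j < m, ε j = 1 ∨ ε j = -1) ∧
      (∑ j ∈ Finset.range (2 ^ m - 1), x j) +
        (∑ j ∈ Finset.range m, ε j * 2 ^ j * x (2 ^ m - 1 + j)) = 0 := by
  have h2 : 1 ≤ 2 ^ m := Nat.one_le_two_pow
  set y : ℕ → ℤ := fun j => if x j = 1 then 1 else -1 with hy
  have hxy : ∀ i < 2 ^ m + m - 1, x i = (y i : ℝ) := by
    intro i hi
    rcases hx i hi with h | h <;> norm_num [hy, h]
  have habs : ∀ j, |y j| = 1 := by
    intro j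
    by_cases h : x j = 1 <;> simp [hy, h]
  have hev : ∀ j, 2 ∣ (1 - y j) := by
    intro j
    by_cases h : x j = 1 <;> simp [hy, h] <;> norm_num
  set S : ℤ := ∑ j ∈ Finset.range (2 ^ m - 1), y j with hS
  have hcast : ((2 ^ m - 1 : ℕ) : ℤ) = 2 ^ m - 1 := by push_cast [h2]; ring
  have hSb : |S| ≤ 2 ^ m - 1 := by
    calc |S| ≤ ∑ j ∈ Finset.range (2 ^ m - 1), |y j| := Finset.abs_sum_le_sum_abs _ _
    _ = ∑ j ∈ Finset.range (2 ^ m - 1), 1 := Finset.sum_congr rfl fun j _ => habs j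
    _ = 2 ^ m - 1 := by rw [Finset.sum_const, Finset.card_range]; simpa using hcast
  have hSp : 2 ∣ (-S + 2 ^ m - 1) := by
    have hEq : -S + 2 ^ m - 1 = ∑ j ∈ Finset.range (2 ^ m - 1), (1 - y j) := by
      rw [Finset.sum_sub_distrib, Finset.sum_const, Finset.card_range]
      simp only [nsmul_eq_mul, mul_one]
      rw [hcast]; ring
    rw [hEq]
    exact Finset.dvd_sum fun j _ => hev j
  obtain ⟨σ, hσ, hs⟩ := exists_signs m (-S) (by simpa using hSb) hSp
  refine ⟨fun j => (σ j : ℝ) * x (2 ^ m - 1 + j), ?_, ?_⟩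
  · intro j hj
    have hlt : 2 ^ m - 1 + j < 2 ^ m + m - 1 := by omega
    rcases hσ j hj with h | h <;> rcases hx _ hlt with h' | h' <;> simp [h, h']
  · have hsum1 : (∑ j ∈ Finset.range (2 ^ m - 1), x j) = (S : ℝ) := by
      rw [hS]; push_cast
      refine Finset.sum_congr rfl fun j hj => ?_
      rw [Finset.mem_range] at hj
      exact hxy j (by omega)
    have hsum2 : (∑ j ∈ Finset.range m, (σ j : ℝ) * x (2 ^ m - 1 + j) * 2 ^ j * x (2 ^ m - 1 + j))
        = ((-S : ℤ) : ℝ) := by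
      rw [← hs]; push_cast
      refine Finset.sum_congr rfl fun j hj => ?_
      rw [Finset.mem_range] at hj
      have hlt : 2 ^ m - 1 + j < 2 ^ m + m - 1 := by omega
      rcases hx _ hlt with h' | h' <;> rw [h'] <;> ring
    rw [hsum1, hsum2]
    push_cast; ring
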